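/- The scalar systems u̇ = -10u and v̇ = -12v are nonuniformly (μ,2)-kinematically similar with respect to μ(t) = e^t via S(t) = e^{2t}: |S(t)| ≤ μ(t)^{2·sgn(t)}, |S(t)^{-1}| ≤ μ(t)^{2·sgn(t)}, and e^{-10(t-s)}e^{2s} = e^{2t}e^{-12(t-s)} for all t,s ∈ ℝ; yet their μ-dichotomy spectra differ: Σ_{NμD}(-10) = {-10} ≠ {-12} = Σ_{NμD}(-12). -/

import Mathlib

open Real Set Filter

noncomputable section

/-- A growth rate: strictly increasing, positive, `μ 0 = 1`, `μ → ∞` at `+∞`, `μ → 0` at `-∞`. -/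
structure GrowthRate (μ : ℝ → ℝ) : Prop where
  pos : ∀ t, 0 < μ t
  mono : StrictMono μ
  one : μ 0 = 1
  top : Filter.Tendsto μ Filter.atTop Filter.atTop
  bot : Filter.Tendsto μ Filter.atBot (nhds 0)

/-- Nonuniform μ-dichotomy with projector `P` and parameters `(K, α, β, θ, ν)`. -/
def IsNmuD {M : Type*} [NormedRing M] (μ : ℝ → ℝ) (Φ : ℝ → ℝ → M) (P : ℝ → M)
    (K α β θ ν : ℝ) : Prop :=
  1 ≤ K ∧ α < 0 ∧ 0 < β ∧ 0 ≤ θ ∧ 0 ≤ ν ∧ α + θ < 0 ∧ 0 < β - ν ∧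
  (∀ t s : ℝ, s ≤ t →
    ‖Φ t s * P s‖ ≤ K * (μ t / μ s) ^ α * (μ s) ^ (Real.sign s * θ)) ∧
  (∀ t s : ℝ, t ≤ s →
    ‖Φ t s * (1 - P s)‖ ≤ K * (μ t / μ s) ^ β * (μ s) ^ (Real.sign s * ν))

/-- Invariant projector for an evolution operator. -/
def IsInvProj {M : Type*} [Ring M] (Φ : ℝ → ℝ → M) (P : ℝ → M) : Prop :=
  (∀ s, P s * P s = P s) ∧ ∀ t s : ℝ, P t * Φ t s = Φ t s * P s

/-- The γ-shifted evolution operator `Φ_γ(t,s) = (μ t / μ s)^(-γ) • Φ(t,s)`. -/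
def shiftOp {M : Type*} [Ring M] [Algebra ℝ M] (μ : ℝ → ℝ) (Φ : ℝ → ℝ → M)
    (γ : ℝ) : ℝ → ℝ → M :=
  fun t s => ((μ t / μ s) ^ (-γ) : ℝ) • Φ t s

/-- Region of stable constants of the γ-shifted system. -/
def StSet {M : Type*} [NormedRing M] [NormedAlgebra ℝ M] (μ : ℝ → ℝ) (Φ : ℝ → ℝ → M)
    (P : ℝ → M) (γ : ℝ) : Set (ℝ × ℝ) :=
  {p | ∃ K β ν, IsNmuD μ (shiftOp μ Φ γ) P K p.1 β p.2 ν}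

/-- Region of unstable constants of the γ-shifted system. -/
def UnSet {M : Type*} [NormedRing M] [NormedAlgebra ℝ M] (μ : ℝ → ℝ) (Φ : ℝ → ℝ → M)
    (P : ℝ → M) (γ : ℝ) : Set (ℝ × ℝ) :=
  {p | ∃ K α θ, IsNmuD μ (shiftOp μ Φ γ) P K α p.1 θ p.2}

/-- Optimal stable ratio `𝔰𝔱_P^γ = inf {α + θ : (α, θ) ∈ St_P^γ}`. -/
def stRatio {M : Type*} [NormedRing M] [NormedAlgebra ℝ M] (μ : ℝ → ℝ) (Φ : ℝ → ℝ → M)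
    (P : ℝ → M) (γ : ℝ) : ℝ :=
  sInf ((fun p : ℝ × ℝ => p.1 + p.2) '' StSet μ Φ P γ)

/-- Optimal unstable ratio `𝔲𝔫_P^γ = sup {β - ν : (β, ν) ∈ Un_P^γ}`. -/
def unRatio {M : Type*} [NormedRing M] [NormedAlgebra ℝ M] (μ : ℝ → ℝ) (Φ : ℝ → ℝ → M)
    (P : ℝ → M) (γ : ℝ) : ℝ :=
  sSup ((fun p : ℝ × ℝ => p.1 - p.2) '' UnSet μ Φ P γ)

/-- Nonuniform μ-bounded growth with constants `Khat`, `a` and parameter `ep`. -/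
def HasNmuGrowth {M : Type*} [NormedRing M] (μ : ℝ → ℝ) (Φ : ℝ → ℝ → M)
    (Khat a ep : ℝ) : Prop :=
  1 ≤ Khat ∧ 0 ≤ a ∧ ∀ t s : ℝ,
    ‖Φ t s‖ ≤ Khat * (μ t / μ s) ^ (Real.sign (t - s) * a) * μ s ^ (Real.sign s * ep)

/-- The nonuniform μ-dichotomy resolvent set. -/
def NmuResolvent {M : Type*} [NormedRing M] [NormedAlgebra ℝ M] (μ : ℝ → ℝ)
    (Φ : ℝ → ℝ → M) : Set ℝ :=
  {γ | ∃ P K α β θ ν, IsInvProj Φ P ∧ IsNmuD μ (shiftOp μ Φ γ) P K α β θ ν}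

/-- Nonuniform (μ, ε)-kinematic similarity via the Lyapunov pair `S`, `Sinv`. -/
def KinSim {M : Type*} [NormedRing M] (μ : ℝ → ℝ) (Φ Ψ : ℝ → ℝ → M)
    (S Sinv : ℝ → M) (ε Mc : ℝ) : Prop :=
  0 < Mc ∧ (∀ t, S t * Sinv t = 1) ∧ (∀ t, Sinv t * S t = 1) ∧
  (∀ t, ‖S t‖ ≤ Mc * μ t ^ (Real.sign t * ε)) ∧
  (∀ t, ‖Sinv t‖ ≤ Mc * μ t ^ (Real.sign t * ε)) ∧
  (∀ t s : ℝ, Φ t s * S s = S t * Ψ t s)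

/-- The global optimal ratio function. -/
def Gor {M : Type*} [NormedRing M] [NormedAlgebra ℝ M] (μ : ℝ → ℝ)
    (Φ : ℝ → ℝ → M) (γ : ℝ) : ℝ :=
  sSup {x | ∃ P K α β θ ν, IsInvProj Φ P ∧ IsNmuD μ (shiftOp μ Φ γ) P K α β θ ν ∧
    x = min (-(α + θ)) (β - ν)}

lemma exp_rpow' (x y : ℝ) : (Real.exp x) ^ y = Real.exp (x * y) := by
  rw [Real.rpow_def_of_pos (Real.exp_pos x), Real.log_exp]

lemma abs_exp_le (t : ℝ) : |Real.exp (2 * t)| ≤ (Real.exp t) ^ (Real.sign t * 2) := by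
  rw [abs_of_pos (Real.exp_pos _), exp_rpow']
  apply Real.exp_le_exp.mpr
  rcases lt_trichotomy t 0 with h | h | h
  · rw [Real.sign_of_neg h]; nlinarith
  · subst h; norm_num
  · rw [Real.sign_of_pos h]; nlinarith

lemma abs_exp_inv_le (t : ℝ) : |(Real.exp (2 * t))⁻¹| ≤ (Real.exp t) ^ (Real.sign t * 2) := by
  rw [← Real.exp_neg, abs_of_pos (Real.exp_pos _), exp_rpow']
  apply Real.exp_le_exp.mpr
  rcases lt_trichotomy t 0 with h | h | h
  · rw [Real.sign_of_neg h]; nlinarith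
  · subst h; norm_num
  · rw [Real.sign_of_pos h]; nlinarith

lemma shiftOp_eq (lam γ t s : ℝ) :
    shiftOp (fun t => Real.exp t) (fun t s : ℝ => Real.exp (lam * (t - s))) γ t s
      = Real.exp ((lam - γ) * (t - s)) := by
  simp only [shiftOp, smul_eq_mul, ← Real.exp_sub, exp_rpow', ← Real.exp_add]
  congr 1; ring

lemma mem_res (lam γ : ℝ) (h : γ ≠ lam) :
    γ ∈ NmuResolvent (fun t => Real.exp t) (fun t s : ℝ => Real.exp (lam * (t - s))) := by
  rcases lt_or_gt_of_ne h with hlt | hgt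
  · -- γ < lam: unstable case, P = 0
    refine ⟨fun _ => (0 : ℝ), 1, -1, lam - γ, 0, 0,
      ⟨fun s => by ring, fun t s => by ring⟩,
      le_refl 1, by norm_num, by linarith, le_refl 0, le_refl 0, by norm_num, by linarith,
      ?_, ?_⟩
    · intro t s _
      rw [mul_zero, norm_zero]
      positivity
    · intro t s _
      rw [shiftOp_eq, sub_zero, mul_one, Real.norm_eq_abs, abs_of_pos (Real.exp_pos _),
        mul_zero, Real.rpow_zero, mul_one, one_mul, ← Real.exp_sub, exp_rpow']
      exact Real.exp_le_exp.mpr (le_of_eq (by ring))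
  · -- lam < γ: stable case, P = 1
    refine ⟨fun _ => (1 : ℝ), 1, lam - γ, 1, 0, 0,
      ⟨fun s => by ring, fun t s => by ring⟩,
      le_refl 1, by linarith, by norm_num, le_refl 0, le_refl 0, by linarith, by norm_num,
      ?_, ?_⟩
    · intro t s _
      rw [shiftOp_eq, mul_one, Real.norm_eq_abs, abs_of_pos (Real.exp_pos _),
        mul_zero, Real.rpow_zero, mul_one, one_mul, ← Real.exp_sub, exp_rpow']
      exact Real.exp_le_exp.mpr (le_of_eq (by ring))
    · intro t s _
      rw [sub_self, mul_zero, norm_zero]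
      positivity

lemma not_mem_res (lam : ℝ) :
    lam ∉ NmuResolvent (fun t => Real.exp t) (fun t s : ℝ => Real.exp (lam * (t - s))) := by
  rintro ⟨P, K, α, β, θ, ν, ⟨hproj, hinv⟩, hK, hα, hβ, hθ, hν, hαθ, hβν, hst, hun⟩
  have hK0 : (0 : ℝ) < K := lt_of_lt_of_le one_pos hK
  have hshift : ∀ t s : ℝ,
      shiftOp (fun t => Real.exp t) (fun t s : ℝ => Real.exp (lam * (t - s))) lam t s = 1 := by
    intro t s; rw [shiftOp_eq]; simp
  have hPconst : ∀ t : ℝ, P t = P 0 := by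
    intro t
    have h := hinv t 0
    have hne : Real.exp (lam * (t - 0)) ≠ 0 := Real.exp_ne_zero _
    have h' : P t * Real.exp (lam * (t - 0)) = P 0 * Real.exp (lam * (t - 0)) := by
      rw [h]; ring
    exact mul_right_cancel₀ hne h'
  have h01 : P 0 = 0 ∨ P 0 = 1 := by
    have h2 : P 0 * (P 0 - 1) = 0 := by linear_combination hproj 0
    rcases mul_eq_zero.mp h2 with h | h
    · exact Or.inl h
    · exact Or.inr (by linarith)
  have hKexp : ∀ x : ℝ, x = -(Real.log K + 1) → K * Real.exp x = Real.exp (-1) := by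
    intro x hx
    rw [hx, show -(Real.log K + 1) = -Real.log K + (-1) by ring, Real.exp_add,
      Real.exp_neg, Real.exp_log hK0]
    field_simp
  have hlt1 : Real.exp (-1 : ℝ) < 1 := Real.exp_lt_one_iff.mpr (by norm_num)
  rcases h01 with h0 | h1
  · -- P ≡ 0, use unstable estimate at t = -(log K + 1)/β, s = 0
    set t : ℝ := -(Real.log K + 1) / β with ht
    have hlogK : 0 ≤ Real.log K := Real.log_nonneg hK
    have htneg : t ≤ 0 := by
      apply div_nonpos_of_nonpos_of_nonneg <;> [linarith; linarith]
    have := hun t 0 htneg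
    rw [hshift, hPconst 0, h0, sub_zero, mul_one, norm_one] at this
    simp only [Real.exp_zero, div_one, Real.sign_zero, zero_mul, Real.rpow_zero, mul_one,
      Real.one_rpow] at this
    rw [exp_rpow'] at this
    have htβ : t * β = -(Real.log K + 1) := by
      have hne : β ≠ 0 := ne_of_gt hβ
      rw [ht]; field_simp
    rw [hKexp _ htβ] at this
    linarith
  · -- P ≡ 1, use stable estimate at t = (log K + 1)/(-α), s = 0
    set t : ℝ := (Real.log K + 1) / (-α) with ht
    have hlogK : 0 ≤ Real.log K := Real.log_nonneg hK
    have htpos : 0 ≤ t := by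
      apply div_nonneg <;> linarith
    have := hst t 0 htpos
    rw [hshift, hPconst 0, h1, mul_one, norm_one] at this
    simp only [Real.exp_zero, div_one, Real.sign_zero, zero_mul, Real.rpow_zero, mul_one,
      Real.one_rpow] at this
    rw [exp_rpow'] at this
    have htα : t * α = -(Real.log K + 1) := by
      have hne : -α ≠ 0 := ne_of_gt (neg_pos.mpr hα)
      rw [ht, div_mul_eq_mul_div, mul_div_assoc, div_neg, div_self (neg_ne_zero.mp hne)]; ring
    rw [hKexp _ htα] at this
    linarith

lemma spec_eq (lam : ℝ) :
    (NmuResolvent (fun t => Real.exp t) (fun t s : ℝ => Real.exp (lam * (t - s))))ᶜ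
      = {lam} := by
  ext γ
  simp only [Set.mem_compl_iff, Set.mem_singleton_iff]
  constructor
  · intro h
    by_contra hne
    exact h (mem_res lam γ hne)
  · rintro rfl
    exact not_mem_res _

/-- the systems `u̇ = -10u` and `v̇ = -12v` are nonuniformly
(μ, 2)-kinematically similar via `S(t) = e^{2t}`, yet their nonuniform
μ-dichotomy spectra differ. -/
theorem stmt15 :
    (∀ t : ℝ, |Real.exp (2 * t)| ≤ (Real.exp t) ^ (Real.sign t * 2)) ∧
    (∀ t : ℝ, |(Real.exp (2 * t))⁻¹| ≤ (Real.exp t) ^ (Real.sign t * 2)) ∧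
    (∀ t s : ℝ, Real.exp (-10 * (t - s)) * Real.exp (2 * s)
      = Real.exp (2 * t) * Real.exp (-12 * (t - s))) ∧
    KinSim (fun t => Real.exp t)
      (fun t s => Real.exp (-10 * (t - s))) (fun t s => Real.exp (-12 * (t - s)))
      (fun t => Real.exp (2 * t)) (fun t => (Real.exp (2 * t))⁻¹) 2 1 ∧
    (NmuResolvent (fun t => Real.exp t) (fun t s : ℝ => Real.exp (-10 * (t - s))))ᶜ
      = {(-10 : ℝ)} ∧
    (NmuResolvent (fun t => Real.exp t) (fun t s : ℝ => Real.exp (-12 * (t - s))))ᶜ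
      = {(-12 : ℝ)} ∧
    ({(-10 : ℝ)} : Set ℝ) ≠ {(-12 : ℝ)} := by
  refine ⟨abs_exp_le, abs_exp_inv_le, ?_, ?_, spec_eq (-10), spec_eq (-12), ?_⟩
  · intro t s
    rw [← Real.exp_add, ← Real.exp_add]
    congr 1; ring
  · refine ⟨one_pos, fun t => mul_inv_cancel₀ (Real.exp_ne_zero _),
      fun t => inv_mul_cancel₀ (Real.exp_ne_zero _), ?_, ?_, ?_⟩
    · intro t; rw [Real.norm_eq_abs, one_mul]; exact abs_exp_le t
    · intro t; rw [Real.norm_eq_abs, one_mul]; exact abs_exp_inv_le t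
    · intro t s
      rw [← Real.exp_add, ← Real.exp_add]
      congr 1; ring
  · intro h
    have := Set.singleton_eq_singleton_iff.mp h
    norm_num at this
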